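/- Let A be the 3-dimensional commutative ℂ-algebra with basis e₁, e₂, e₃ and nonzero products e₁e₁ = e₂ and e₂e₂ = e₃ (all other products of basis vectors are zero). Then a ℂ-linear map φ : A → A is an algebra automorphism of A if and only if there exist x, z ∈ ℂ with x ≠ 0 such that φ(e₁) = x e₁ + z e₃, φ(e₂) = x² e₂, and φ(e₃) = x⁴ e₃. -/
import Mathlib


/-- The multiplication of the 3-dimensional commutative algebra with
`e₁e₁ = e₂`, `e₂e₂ = e₃` (all other products of basis vectors zero),
on the carrier `Fin 3 → ℂ`. -/
def mulB (u v : Fin 3 → ℂ) : Fin 3 → ℂ :=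
  ![0, u 0 * v 0, u 1 * v 1]

lemma decomp (u : Fin 3 → ℂ) :
    u = u 0 • ![(1:ℂ), 0, 0] + u 1 • ![0, 1, 0] + u 2 • ![0, 0, 1] := by
  funext i; fin_cases i <;> simp

/-- A linear map `φ` of the algebra `e₁e₁ = e₂, e₂e₂ = e₃` is an algebra automorphism iff
`φ(e₁) = x e₁ + z e₃`, `φ(e₂) = x² e₂`, `φ(e₃) = x⁴ e₃` for some `x, z ∈ ℂ` with `x ≠ 0`. -/
theorem stmt13 (φ : (Fin 3 → ℂ) →ₗ[ℂ] (Fin 3 → ℂ)) :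
    (Function.Bijective φ ∧ ∀ u v : Fin 3 → ℂ, φ (mulB u v) = mulB (φ u) (φ v)) ↔
    (∃ x z : ℂ, x ≠ 0 ∧
      φ ![1, 0, 0] = ![x, 0, z] ∧
      φ ![0, 1, 0] = ![0, x ^ 2, 0] ∧
      φ ![0, 0, 1] = ![0, 0, x ^ 4]) := by
  constructor
  · rintro ⟨hbij, hm⟩
    set a := φ ![1, 0, 0] with ha
    -- φ e₂ = mulB (φ e₁) (φ e₁)
    have h1 : φ ![0, 1, 0] = ![0, a 0 ^ 2, a 1 ^ 2] := by
      have := hm ![1, 0, 0] ![1, 0, 0]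
      have he : mulB ![(1:ℂ),0,0] ![1,0,0] = ![0,1,0] := by
        funext i; fin_cases i <;> simp [mulB]
      rw [he] at this
      rw [this]; funext i; fin_cases i <;> simp [mulB] <;> ring
    have h2 : φ ![0, 0, 1] = ![0, 0, a 0 ^ 4] := by
      have := hm ![0, 1, 0] ![0, 1, 0]
      have he : mulB ![(0:ℂ),1,0] ![0,1,0] = ![0,0,1] := by
        funext i; fin_cases i <;> simp [mulB]
      rw [he, h1] at this
      rw [this]; funext i; fin_cases i <;> simp [mulB] <;> ring
    have hx : a 0 ≠ 0 := by
      intro h0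
      have hz : φ ![0, 0, 1] = φ 0 := by
        rw [h2, map_zero]; funext i; fin_cases i <;> simp [h0]
      have := hbij.1 hz
      have := congrFun this 2
      simp at this
    -- from mulB e₁ e₂ = 0 get a 1 * a 0 ^ 2 = 0
    have hb : a 1 = 0 := by
      have := hm ![1, 0, 0] ![0, 1, 0]
      have he : mulB ![(1:ℂ),0,0] ![0,1,0] = 0 := by
        funext i; fin_cases i <;> simp [mulB]
      rw [he, map_zero, h1] at this
      have := congrFun this.symm 2
      simp [mulB] at this
      rcases this with h | h
      · exact h
      · exact absurd h hx
    have h1' : φ ![0, 1, 0] = ![0, a 0 ^ 2, 0] := by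
      rw [h1, hb]; norm_num
    refine ⟨a 0, a 2, hx, ?_, h1', h2⟩
    · funext i; fin_cases i
      · rfl
      · simpa using hb
      · rfl
  · rintro ⟨x, z, hx, h0, h1, h2⟩
    have hφ : ∀ u : Fin 3 → ℂ,
        φ u = ![x * u 0, x ^ 2 * u 1, z * u 0 + x ^ 4 * u 2] := by
      intro u
      conv_lhs => rw [decomp u]
      rw [map_add, map_add, map_smul, map_smul, map_smul, h0, h1, h2]
      funext i; fin_cases i <;> simp <;> ring
    have hinj : Function.Injective φ := by
      intro u v h
      rw [hφ u, hφ v] at h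
      have e0 := congrFun h 0
      have e1 := congrFun h 1
      have e2 := congrFun h 2
      simp at e0 e1 e2
      have hu0 : u 0 = v 0 := e0.resolve_right hx
      have hu1 : u 1 = v 1 := e1.resolve_right hx
      have hu2 : u 2 = v 2 := by
        rw [hu0] at e2
        exact mul_left_cancel₀ (pow_ne_zero 4 hx) (add_left_cancel e2)
      funext i; fin_cases i <;> assumption
    refine ⟨⟨hinj, (LinearMap.injective_iff_surjective).mp hinj⟩, ?_⟩
    intro u v
    rw [hφ (mulB u v), hφ u, hφ v]
    funext i; fin_cases i <;> simp [mulB] <;> ring
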